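/- Let (S_1,…,S_d) and (Ŝ_1,…,Ŝ_d) be two Cuntz families on the same complex Hilbert space H such that every S_i and S_i* commutes with every Ŝ_j and Ŝ_j*, and let Ω be a unit vector with S_i* Ω = Ŝ_i* Ω for every 1 ≤ i ≤ d. Then for all 1 ≤ i, j ≤ d and all finite multi-indices I, J, I', J': ⟨Ω, Ŝ_{I'} Ŝ_{J'}* S_i S_I S_J* S_j* Ω⟩ = ⟨Ω, Ŝ_i Ŝ_{I'} Ŝ_{J'}* Ŝ_j* S_I S_J* Ω⟩. -/

import Mathlib

open ContinuousLinearMap Filter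
open scoped ComplexInnerProductSpace ComplexOrder

noncomputable section

/-- The operator `S_I = S_{i₁} ⋯ S_{i_m}` associated to a finite multi-index
(the empty multi-index gives the identity). -/
def cword {d : ℕ} {H : Type*} [NormedAddCommGroup H] [InnerProductSpace ℂ H]
    (S : Fin d → H →L[ℂ] H) (I : List (Fin d)) : H →L[ℂ] H :=
  (I.map S).prod

/-- A Cuntz family: `Sᵢ* Sⱼ = δᵢⱼ 1` and `∑ₖ Sₖ Sₖ* = 1`. -/
def IsCuntzFamily {d : ℕ} {H : Type*} [NormedAddCommGroup H] [InnerProductSpace ℂ H]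
    [CompleteSpace H] (S : Fin d → H →L[ℂ] H) : Prop :=
  (∀ i j : Fin d, adjoint (S i) ∘L S j = if i = j then 1 else 0) ∧
    ∑ k : Fin d, S k ∘L adjoint (S k) = 1

section Aux

variable {d : ℕ} {H : Type*} [NormedAddCommGroup H] [InnerProductSpace ℂ H] [CompleteSpace H]

lemma commute_cword (T : Fin d → H →L[ℂ] H) (X : H →L[ℂ] H)
    (h : ∀ j, Commute X (T j)) (L : List (Fin d)) : Commute X (cword T L) := by
  induction L with
  | nil => simpa [cword] using Commute.one_right X
  | cons a L ih =>
    rw [cword, List.map_cons, List.prod_cons]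
    exact (h a).mul_right ih

lemma commute_cword_adj (T : Fin d → H →L[ℂ] H) (X : H →L[ℂ] H)
    (h : ∀ j, Commute X (adjoint (T j))) (L : List (Fin d)) :
    Commute X (adjoint (cword T L)) := by
  induction L with
  | nil =>
    have h1 : adjoint (cword T ([] : List (Fin d))) = (1 : H →L[ℂ] H) := by
      simp [cword, ContinuousLinearMap.one_def, ContinuousLinearMap.adjoint_id]
    rw [h1]; exact Commute.one_right X
  | cons a L ih =>
    rw [cword, List.map_cons, List.prod_cons,
      show (T a * (L.map T).prod : H →L[ℂ] H) = T a ∘L (L.map T).prod from rfl, adjoint_comp]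
    exact Commute.mul_right ih (h a)

lemma swap_apply {X Y : H →L[ℂ] H} (h : Commute X Y) (v : H) : X (Y v) = Y (X v) := by
  have := congrArg (fun (Z : H →L[ℂ] H) => Z v) h.eq
  simpa using this

end Aux

/-- For two commuting Cuntz families `S`, `T` on `H` and a unit vector `Ω`
with `Sᵢ* Ω = Tᵢ* Ω` for all `i`, the mixed correlation functions satisfy
`⟨Ω, T_{I'} T_{J'}* Sᵢ S_I S_J* Sⱼ* Ω⟩ = ⟨Ω, Tᵢ T_{I'} T_{J'}* Tⱼ* S_I S_J* Ω⟩`. -/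
theorem commuting_cuntz_exchange_identity {d : ℕ} (hd : 2 ≤ d)
    {H : Type*} [NormedAddCommGroup H] [InnerProductSpace ℂ H] [CompleteSpace H]
    (S T : Fin d → H →L[ℂ] H) (hS : IsCuntzFamily S) (hT : IsCuntzFamily T)
    (hcomm : ∀ i j : Fin d,
      Commute (S i) (T j) ∧ Commute (S i) (adjoint (T j)) ∧
      Commute (adjoint (S i)) (T j) ∧ Commute (adjoint (S i)) (adjoint (T j)))
    (Ω : H) (hΩ : ‖Ω‖ = 1)
    (hvac : ∀ i : Fin d, adjoint (S i) Ω = adjoint (T i) Ω) :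
    ∀ (i j : Fin d) (I J I' J' : List (Fin d)),
      ⟪Ω, (cword T I' ∘L adjoint (cword T J') ∘L S i ∘L cword S I ∘L adjoint (cword S J)
            ∘L adjoint (S j)) Ω⟫
        = ⟪Ω, (T i ∘L cword T I' ∘L adjoint (cword T J') ∘L adjoint (T j) ∘L cword S I
            ∘L adjoint (cword S J)) Ω⟫ := by
  intro i j I J I' J'
  have cBSadj : ∀ k, Commute (adjoint (T j)) (adjoint (S k)) :=
    fun k => ((hcomm k j).2.2.2).symm
  have cBS : ∀ k, Commute (adjoint (T j)) (S k) := fun k => ((hcomm k j).2.1).symm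
  simp only [comp_apply]
  rw [hvac j,
    swap_apply ((commute_cword_adj S (adjoint (T j)) cBSadj J).symm),
    swap_apply ((commute_cword S (adjoint (T j)) cBS I).symm),
    swap_apply ((commute_cword_adj T (S i) (fun k => (hcomm i k).2.1) J').symm),
    swap_apply (commute_cword T (S i) (fun k => (hcomm i k).1) I').symm]
  conv_lhs => rw [← adjoint_inner_left]
  rw [hvac i, adjoint_inner_left]
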